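/- For positive integers k and n, let P be a family of injective functions from [k] = {1,…,k} to [n] = {1,…,n}. For 0 ≤ i < k and every tuple ā = (a_1,…,a_i) of pairwise distinct elements of [n], let P_ā = {p ∈ P : p(1) = a_1, …, p(i) = a_i}, let X_ā = {m ∈ [n] : m ≠ p(j+1) for every 0 ≤ j ≤ i−1 and every p ∈ P_{(a_1,…,a_j)}}, and let Q_ā = {p : [k] → [n] : p(j) ∈ X_ā for every i < j ≤ k}. Suppose P satisfies the exclusion property: for every 1 ≤ i < k and every such tuple ā of length i, P_ā ⊆ Q_ā. Then |P| ≤ (n/k)^k. -/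

import Mathlib

open Finset

/-- The subfamily of `P` agreeing with a prefix `a` of length `i`. -/
def exclSubP (k n i : ℕ) (hi : i ≤ k) (P : Finset (Fin k → Fin n))
    (a : Fin i → Fin n) : Finset (Fin k → Fin n) :=
  P.filter (fun p => ∀ j : Fin i, p (Fin.castLE hi j) = a j)

/-- The set of values not forbidden after prefix `a`. -/
def exclXset (k n i : ℕ) (hi : i ≤ k) (P : Finset (Fin k → Fin n))
    (a : Fin i → Fin n) : Finset (Fin n) :=
  Finset.univ.filter (fun m => ∀ (j : ℕ) (hj : j < i), ∀ q ∈ P,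
    (∀ (l : Fin k) (hl : (l : ℕ) < j), q l = a ⟨(l : ℕ), hl.trans hj⟩) →
    m ≠ q ⟨j, hj.trans_le hi⟩)

lemma exclSnocLt {i n : ℕ} (a : Fin i → Fin n) (b : Fin n) (l : ℕ)
    (h : l < i) (h' : l < i + 1) :
    (Fin.snoc a b : Fin (i + 1) → Fin n) ⟨l, h'⟩ = a ⟨l, h⟩ := by
  have : (⟨l, h'⟩ : Fin (i + 1)) = Fin.castSucc ⟨l, h⟩ := rfl
  rw [this, Fin.snoc_castSucc]

lemma exclSnocTop {i n : ℕ} (a : Fin i → Fin n) (b : Fin n) (h : i < i + 1) :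
    (Fin.snoc a b : Fin (i + 1) → Fin n) ⟨i, h⟩ = b := by
  have : (⟨i, h⟩ : Fin (i + 1)) = Fin.last i := rfl
  rw [this, Fin.snoc_last]

/-- AM-GM step: `t * ((x-t)/s)^s ≤ (x/(s+1))^(s+1)` for `0 ≤ t ≤ x`. -/
lemma exclAmgm (s : ℕ) (t x : ℝ) (h0 : 0 ≤ t) (htx : t ≤ x) :
    t * ((x - t) / s) ^ s ≤ (x / (s + 1)) ^ (s + 1) := by
  rcases Nat.eq_zero_or_pos s with rfl | hs
  · simpa using htx
  · have hs0 : (0 : ℝ) < (s : ℝ) := by exact_mod_cast hs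
    have hs1 : (0 : ℝ) < (s : ℝ) + 1 := by linarith
    set p₂ : ℝ := (x - t) / s with hp2def
    have hp2 : 0 ≤ p₂ := div_nonneg (by linarith) hs0.le
    have hw : (1 / ((s : ℝ) + 1)) + ((s : ℝ) / ((s : ℝ) + 1)) = 1 := by
      rw [← add_div, add_comm 1 (s : ℝ), div_self hs1.ne']
    have hgm := Real.geom_mean_le_arith_mean2_weighted
      (by positivity) (by positivity) h0 hp2 hw
    have hrhs : (1 / ((s : ℝ) + 1)) * t + ((s : ℝ) / ((s : ℝ) + 1)) * p₂
        = x / ((s : ℝ) + 1) := by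
      rw [hp2def]; field_simp; ring
    rw [hrhs] at hgm
    have hpow := pow_le_pow_left₀ (by positivity) hgm (s + 1)
    calc t * p₂ ^ s
        = (t ^ ((1 : ℝ) / ((s : ℝ) + 1)) * p₂ ^ ((s : ℝ) / ((s : ℝ) + 1))) ^ (s + 1) := by
          have e1 : (1 : ℝ) / ((s : ℝ) + 1) * ((s + 1 : ℕ) : ℝ) = 1 := by
            push_cast; exact one_div_mul_cancel hs1.ne'
          have e2 : (s : ℝ) / ((s : ℝ) + 1) * ((s + 1 : ℕ) : ℝ) = (s : ℝ) := by
            push_cast; exact div_mul_cancel₀ _ hs1.ne'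
          rw [mul_pow, ← Real.rpow_natCast (t ^ ((1 : ℝ) / ((s : ℝ) + 1))) (s + 1),
            ← Real.rpow_natCast (p₂ ^ ((s : ℝ) / ((s : ℝ) + 1))) (s + 1),
            ← Real.rpow_mul h0, ← Real.rpow_mul hp2, e1, e2,
            Real.rpow_one, Real.rpow_natCast]
      _ ≤ (x / ((s : ℝ) + 1)) ^ (s + 1) := hpow

lemma exclKey (k n : ℕ) (P : Finset (Fin k → Fin n))
    (hinj : ∀ p ∈ P, Function.Injective p)
    (hexcl : ∀ (i : ℕ), 1 ≤ i → ∀ (hik : i < k) (a : Fin i → Fin n),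
      Function.Injective a →
      ∀ p ∈ P, (∀ j : Fin i, p (Fin.castLE hik.le j) = a j) →
      ∀ r : Fin k, i ≤ (r : ℕ) →
      ∀ (j : ℕ) (hj : j < i), ∀ q ∈ P,
        (∀ (l : Fin k) (hl : (l : ℕ) < j), q l = a ⟨(l : ℕ), hl.trans hj⟩) →
        p r ≠ q ⟨j, hj.trans hik⟩) :
    ∀ (d i : ℕ), i + d = k → ∀ (hi : i ≤ k) (a : Fin i → Fin n),
      Function.Injective a →
      ((exclSubP k n i hi P a).card : ℝ) ≤
        (((exclXset k n i hi P a).card : ℝ) / d) ^ d := by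
  intro d
  induction d with
  | zero =>
    intro i hd hi a ha
    obtain rfl : i = k := by omega
    simp only [Nat.cast_zero, pow_zero]
    have h1 : (exclSubP i n i hi P a).card ≤ 1 := by
      refine Finset.card_le_one.2 ?_
      intro p hp q hq
      simp only [exclSubP, Finset.mem_filter] at hp hq
      funext j
      have e1 := hp.2 j
      have e2 := hq.2 j
      have hcj : Fin.castLE hi j = j := rfl
      rw [hcj] at e1 e2
      rw [e1, e2]
    exact_mod_cast h1
  | succ d ih =>
    intro i hd hi a ha
    have hik : i < k := by omega
    have hi1 : i + 1 ≤ k := hik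
    set S := exclSubP k n i hi P a with hS
    set A := S.image (fun p => p ⟨i, hik⟩) with hA
    set X := exclXset k n i hi P a with hX
    -- A ⊆ X
    have hAX : A ⊆ X := by
      intro b hb
      rw [hA, Finset.mem_image] at hb
      obtain ⟨p, hp, rfl⟩ := hb
      rw [hS] at hp
      simp only [exclSubP, Finset.mem_filter] at hp
      rw [hX]
      simp only [exclXset, Finset.mem_filter, Finset.mem_univ, true_and]
      intro j hj q hq hqa
      have hi1' : 1 ≤ i := by omega
      exact hexcl i hi1' hik a ha p hp.1 hp.2 ⟨i, hik⟩ le_rfl j hj q hq hqa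
    -- fibers
    have hfiber : ∀ b : Fin n, S.filter (fun p => p ⟨i, hik⟩ = b) =
        exclSubP k n (i + 1) hi1 P (Fin.snoc a b) := by
      intro b
      ext p
      simp only [hS, exclSubP, Finset.mem_filter, and_assoc]
      constructor
      · rintro ⟨hP, hpre, hlast⟩
        refine ⟨hP, ?_⟩
        intro j
        refine Fin.lastCases ?_ ?_ j
        · rw [Fin.snoc_last]
          have hc : Fin.castLE hi1 (Fin.last i) = (⟨i, hik⟩ : Fin k) := rfl
          rw [hc, hlast]
        · intro j'
          rw [Fin.snoc_castSucc]
          have hc : Fin.castLE hi1 (Fin.castSucc j') = Fin.castLE hi j' := rfl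
          rw [hc, hpre j']
      · rintro ⟨hP, hpre⟩
        refine ⟨hP, ?_, ?_⟩
        · intro j
          have h := hpre (Fin.castSucc j)
          rwa [Fin.snoc_castSucc,
            (rfl : Fin.castLE hi1 (Fin.castSucc j) = Fin.castLE hi j)] at h
        · have h := hpre (Fin.last i)
          rwa [Fin.snoc_last,
            (rfl : Fin.castLE hi1 (Fin.last i) = (⟨i, hik⟩ : Fin k))] at h
    -- X of extension
    have hXext : ∀ b : Fin n,
        exclXset k n (i + 1) hi1 P (Fin.snoc a b) = X \ A := by
      intro b
      ext m
      rw [Finset.mem_sdiff]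
      constructor
      · intro h
        simp only [exclXset, Finset.mem_filter, Finset.mem_univ, true_and] at h
        constructor
        · rw [hX]
          simp only [exclXset, Finset.mem_filter, Finset.mem_univ, true_and]
          intro j hj q hq hqa
          refine h j (by omega) q hq ?_
          intro l hl
          exact (hqa l hl).trans (exclSnocLt a b (l : ℕ) (hl.trans hj) (by omega)).symm
        · intro hm
          rw [hA, Finset.mem_image] at hm
          obtain ⟨p, hp, hpm⟩ := hm
          rw [hS] at hp
          simp only [exclSubP, Finset.mem_filter] at hp
          refine h i (Nat.lt_succ_self i) p hp.1 ?_ hpm.symm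
          intro l hl
          exact (hp.2 ⟨(l : ℕ), hl⟩).trans (exclSnocLt a b (l : ℕ) hl (by omega)).symm
      · rintro ⟨hmX, hmA⟩
        simp only [exclXset, Finset.mem_filter, Finset.mem_univ, true_and]
        intro j hj q hq hqa
        rcases Nat.lt_or_ge j i with hji | hji
        · rw [hX] at hmX
          simp only [exclXset, Finset.mem_filter, Finset.mem_univ, true_and] at hmX
          refine hmX j hji q hq ?_
          intro l hl
          exact (hqa l hl).trans (exclSnocLt a b (l : ℕ) (hl.trans hji) (by omega))
        · have hji' : j = i := by omega
          subst hji'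
          intro hmq
          apply hmA
          rw [hA, Finset.mem_image]
          refine ⟨q, ?_, hmq.symm⟩
          rw [hS]
          simp only [exclSubP, Finset.mem_filter]
          refine ⟨hq, fun l => ?_⟩
          exact (hqa (Fin.castLE hi l) l.isLt).trans
            (exclSnocLt a b (l : ℕ) l.isLt (by omega))
      -- injectivity of snoc
    have hbr : ∀ b ∈ A, ∀ j : Fin i, a j ≠ b := by
      intro b hb j hjb
      rw [hA, Finset.mem_image] at hb
      obtain ⟨p, hp, rfl⟩ := hb
      rw [hS] at hp
      simp only [exclSubP, Finset.mem_filter] at hp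
      have h1 : p (Fin.castLE hi j) = p ⟨i, hik⟩ := by rw [hp.2 j, hjb]
      have h2 := hinj p hp.1 h1
      have : (j : ℕ) = i := congrArg Fin.val h2
      omega
    have hsnocinj : ∀ b ∈ A, Function.Injective (Fin.snoc a b : Fin (i + 1) → Fin n) := by
      intro b hb u v huv
      rcases Nat.lt_or_ge (u : ℕ) i with hu | hu <;>
        rcases Nat.lt_or_ge (v : ℕ) i with hv | hv
      · have e1 : (Fin.snoc a b : Fin (i + 1) → Fin n) u = a ⟨(u : ℕ), hu⟩ := exclSnocLt a b _ hu u.isLt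
        have e2 : (Fin.snoc a b : Fin (i + 1) → Fin n) v = a ⟨(v : ℕ), hv⟩ := exclSnocLt a b _ hv v.isLt
        rw [e1, e2] at huv
        have h2 := ha huv
        have hval : (u : ℕ) = (v : ℕ) := Fin.mk_eq_mk.mp h2
        exact Fin.ext hval
      · have hvi : (v : ℕ) = i := by omega
        have e1 : (Fin.snoc a b : Fin (i + 1) → Fin n) u = a ⟨(u : ℕ), hu⟩ := exclSnocLt a b _ hu u.isLt
        have e2 : (Fin.snoc a b : Fin (i + 1) → Fin n) v = b := by
          have : v = ⟨i, Nat.lt_succ_self i⟩ := Fin.ext hvi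
          rw [this, exclSnocTop]
        rw [e1, e2] at huv
        exact absurd huv (hbr b hb _)
      · have hui : (u : ℕ) = i := by omega
        have e1 : (Fin.snoc a b : Fin (i + 1) → Fin n) u = b := by
          have : u = ⟨i, Nat.lt_succ_self i⟩ := Fin.ext hui
          rw [this, exclSnocTop]
        have e2 : (Fin.snoc a b : Fin (i + 1) → Fin n) v = a ⟨(v : ℕ), hv⟩ := exclSnocLt a b _ hv v.isLt
        rw [e1, e2] at huv
        exact absurd huv.symm (hbr b hb _)
      · exact Fin.ext (by omega)
    -- cardinalities
    have hcard : S.card = ∑ b ∈ A, (exclSubP k n (i + 1) hi1 P (Fin.snoc a b)).card := by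
      rw [Finset.card_eq_sum_card_fiberwise
        (f := fun p => p ⟨i, hik⟩) (t := A)
        (fun p hp => Finset.mem_image_of_mem _ hp)]
      exact Finset.sum_congr rfl (fun b _ => by rw [hfiber b])
    have htx : A.card ≤ X.card := Finset.card_le_card hAX
    have hXcard : ∀ b : Fin n,
        (exclXset k n (i + 1) hi1 P (Fin.snoc a b)).card = X.card - A.card := by
      intro b; rw [hXext b, Finset.card_sdiff, Finset.inter_eq_left.mpr hAX]
    have hbound : ∀ b ∈ A, ((exclSubP k n (i + 1) hi1 P (Fin.snoc a b)).card : ℝ) ≤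
        (((X.card - A.card : ℕ) : ℝ) / d) ^ d := by
      intro b hb
      have h := ih (i + 1) (by omega) hi1 (Fin.snoc a b) (hsnocinj b hb)
      rwa [hXcard b] at h
    calc (S.card : ℝ)
        = ∑ b ∈ A, ((exclSubP k n (i + 1) hi1 P (Fin.snoc a b)).card : ℝ) := by
          rw [hcard]; push_cast; rfl
      _ ≤ ∑ b ∈ A, (((X.card - A.card : ℕ) : ℝ) / d) ^ d :=
          Finset.sum_le_sum hbound
      _ = (A.card : ℝ) * (((X.card - A.card : ℕ) : ℝ) / d) ^ d := by
          rw [Finset.sum_const, nsmul_eq_mul]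
      _ = (A.card : ℝ) * (((X.card : ℝ) - (A.card : ℝ)) / d) ^ d := by
          rw [Nat.cast_sub htx]
      _ ≤ ((X.card : ℝ) / ((d : ℝ) + 1)) ^ (d + 1) :=
          exclAmgm d _ _ (by positivity) (by exact_mod_cast htx)
      _ = ((X.card : ℝ) / ((d + 1 : ℕ) : ℝ)) ^ (d + 1) := by push_cast; rfl

/-- Pippenger–Golumbic exclusion lemma. Let `P` be a family of injective functions
`[k] → [n]` (here realised as `Fin k → Fin n`, zero-indexed). Suppose `P` satisfies the
exclusion property: for every `1 ≤ i < k` and every tuple `a` of `i` pairwise distinct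
elements of `[n]`, every `p ∈ P` agreeing with `a` on its first `i` coordinates takes,
at every coordinate `r ≥ i`, a value different from `q(j)` for every `j < i` and every
`q ∈ P` agreeing with `a` on its first `j` coordinates. Then `|P| ≤ (n/k)^k`. -/
theorem exclusion_lemma (k n : ℕ) (hk : 0 < k) (hn : 0 < n)
    (P : Finset (Fin k → Fin n))
    (hinj : ∀ p ∈ P, Function.Injective p)
    (hexcl : ∀ (i : ℕ), 1 ≤ i → ∀ (hik : i < k) (a : Fin i → Fin n),
      Function.Injective a →
      ∀ p ∈ P, (∀ j : Fin i, p (Fin.castLE hik.le j) = a j) →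
      ∀ r : Fin k, i ≤ (r : ℕ) →
      ∀ (j : ℕ) (hj : j < i), ∀ q ∈ P,
        (∀ (l : Fin k) (hl : (l : ℕ) < j), q l = a ⟨(l : ℕ), hl.trans hj⟩) →
        p r ≠ q ⟨j, hj.trans hik⟩) :
    (P.card : ℝ) ≤ ((n : ℝ) / (k : ℝ)) ^ k := by
  have hP : exclSubP k n 0 (Nat.zero_le k) P (fun j => j.elim0) = P := by
    ext p
    simp only [exclSubP, Finset.mem_filter, and_iff_left_iff_imp]
    intro _ j
    exact j.elim0
  have hXu : exclXset k n 0 (Nat.zero_le k) P (fun j => j.elim0) = Finset.univ := by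
    ext m
    simp only [exclXset, Finset.mem_filter, Finset.mem_univ, true_and, iff_true]
    intro j hj
    exact absurd hj (Nat.not_lt_zero j)
  have h := exclKey k n P hinj hexcl k 0 (by omega) (Nat.zero_le k)
    (fun j => j.elim0) (fun x => x.elim0)
  rw [hP, hXu] at h
  simpa [Finset.card_univ] using h
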